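/- Let (v_1,…,v_n) be matroidal valuations, i ∈ N an agent, and X ⊆ Y ⊆ M. Let P = (v_1,…,v_i|X,…,v_n) and P' = (v_1,…,v_i|Y,…,v_n) be the profiles in which agent i's valuation is restricted to X and to Y respectively. Then min_{B∈cLD(P)} |B_i| ≤ min_{B'∈cLD(P')} |B'_i|. -/

import Mathlib

open Finset

/-- A matroidal valuation on the goods `Fin m`: a monotone submodular function
with `v ∅ = 0` whose marginal gains lie in `{0,1}`. -/
structure Matroidal (m : ℕ) where
  v : Finset (Fin m) → ℕ
  v_empty : v ∅ = 0
  mono : ∀ ⦃X Y : Finset (Fin m)⦄, X ⊆ Y → v X ≤ v Y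
  submodular : ∀ X Y : Finset (Fin m), v (X ∪ Y) + v (X ∩ Y) ≤ v X + v Y
  marginal : ∀ (X : Finset (Fin m)) (e : Fin m), v (insert e X) ≤ v X + 1

/-- An allocation: the bundles are pairwise disjoint. -/
def IsAllocation {n m : ℕ} (A : Fin n → Finset (Fin m)) : Prop :=
  ∀ i j : Fin n, i ≠ j → Disjoint (A i) (A j)

/-- An allocation is clean (for matroidal valuations) iff each bundle is independent. -/
def Clean {n m : ℕ} (P : Fin n → Matroidal m) (A : Fin n → Finset (Fin m)) : Prop :=
  ∀ i, (P i).v (A i) = (A i).card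

/-- A utilitarian optimal allocation. -/
def UtilOpt {n m : ℕ} (P : Fin n → Matroidal m) (A : Fin n → Finset (Fin m)) : Prop :=
  IsAllocation A ∧ ∀ B : Fin n → Finset (Fin m), IsAllocation B →
    ∑ i, (P i).v (B i) ≤ ∑ i, (P i).v (A i)

/-- The sum of the `k` smallest entries of `u`, as the minimum of all `k`-subset sums. -/
noncomputable def kSmallestSum {n : ℕ} (u : Fin n → ℕ) (k : ℕ) : ℕ :=
  sInf {s | ∃ S : Finset (Fin n), S.card = k ∧ s = ∑ i ∈ S, u i}

/-- `A` is Lorenz dominating: it is an allocation that Lorenz dominates every allocation. -/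
def LorenzDominating {n m : ℕ} (P : Fin n → Matroidal m) (A : Fin n → Finset (Fin m)) : Prop :=
  IsAllocation A ∧ ∀ B : Fin n → Finset (Fin m), IsAllocation B →
    ∀ k ≤ n, kSmallestSum (fun i => (P i).v (B i)) k ≤ kSmallestSum (fun i => (P i).v (A i)) k

/-- The set of clean Lorenz dominating allocations. -/
def cLD {n m : ℕ} (P : Fin n → Matroidal m) : Set (Fin n → Finset (Fin m)) :=
  {A | Clean P A ∧ LorenzDominating P A}

/-- `min_{B ∈ cLD(P)} |B_i|`. -/
noncomputable def minSize {n m : ℕ} (P : Fin n → Matroidal m) (i : Fin n) : ℕ :=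
  sInf {c | ∃ A ∈ cLD P, c = (A i).card}

/-- `max_{B ∈ cLD(P)} |B_i|`. -/
noncomputable def maxSize {n m : ℕ} (P : Fin n → Matroidal m) (i : Fin n) : ℕ :=
  sSup {c | ∃ A ∈ cLD P, c = (A i).card}

/-- The SE subsidy for agent `i` under allocation `A` and profile `P`. -/
noncomputable def sePay {n m : ℕ} (P : Fin n → Matroidal m) (A : Fin n → Finset (Fin m))
    (i : Fin n) : ℕ :=
  if (A i).card = minSize P i ∧ (A i).card < Finset.univ.sup (fun j => (A j).card) then 1 else 0

/-- Restriction of a matroidal valuation to a set `X`. -/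
def Matroidal.restrict {m : ℕ} (w : Matroidal m) (X : Finset (Fin m)) : Matroidal m where
  v Y := w.v (X ∩ Y)
  v_empty := by simp [w.v_empty]
  mono := fun {Y Z} h => w.mono (Finset.inter_subset_inter le_rfl h)
  submodular := fun Y Z => by
    have h := w.submodular (X ∩ Y) (X ∩ Z)
    have h1 : X ∩ (Y ∪ Z) = (X ∩ Y) ∪ (X ∩ Z) := Finset.inter_union_distrib_left X Y Z
    have h2 : X ∩ (Y ∩ Z) = (X ∩ Y) ∩ (X ∩ Z) := by
      ext a; simp [Finset.mem_inter]; tauto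
    simpa [h1, h2] using h
  marginal := fun Y e => by
    by_cases he : e ∈ X
    · have h1 : X ∩ insert e Y = insert e (X ∩ Y) := by
        ext a
        simp only [Finset.mem_inter, Finset.mem_insert]
        constructor
        · rintro ⟨ha, h⟩
          rcases h with rfl | hb
          · exact Or.inl rfl
          · exact Or.inr ⟨ha, hb⟩
        · rintro (rfl | ⟨ha, hb⟩)
          · exact ⟨he, Or.inl rfl⟩
          · exact ⟨ha, Or.inr hb⟩
      simpa [h1] using w.marginal (X ∩ Y) e
    · have h1 : X ∩ insert e Y = X ∩ Y := by
        ext a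
        simp only [Finset.mem_inter, Finset.mem_insert]
        constructor
        · rintro ⟨ha, (rfl | hb)⟩
          · exact absurd ha he
          · exact ⟨ha, hb⟩
        · rintro ⟨ha, hb⟩; exact ⟨ha, Or.inr hb⟩
      simp only [h1]
      exact Nat.le_succ _

namespace MRF

variable {n m : ℕ}

def Ind (w : Matroidal m) (S : Finset (Fin m)) : Prop := w.v S = S.card

lemma v_le_card (w : Matroidal m) (S : Finset (Fin m)) : w.v S ≤ S.card := by
  classical
  induction S using Finset.induction_on with
  | empty => simp [w.v_empty]
  | @insert a s ha ih =>
      have h1 := w.marginal s a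
      have h2 : (insert a s).card = s.card + 1 := Finset.card_insert_of_notMem ha
      omega

lemma v_union_le_card (w : Matroidal m) (T U : Finset (Fin m)) :
    w.v (T ∪ U) ≤ w.v T + U.card := by
  classical
  induction U using Finset.induction_on with
  | empty => simp
  | @insert a s ha ih =>
      have hu : T ∪ insert a s = insert a (T ∪ s) := by
        ext x; simp only [Finset.mem_insert, Finset.mem_union]; tauto
      have h1 := w.marginal (T ∪ s) a
      have h2 : (insert a s).card = s.card + 1 := Finset.card_insert_of_notMem ha
      rw [hu]; omega

lemma v_le_of_subset (w : Matroidal m) {T S : Finset (Fin m)} (h : T ⊆ S) :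
    w.v S ≤ w.v T + (S \ T).card := by
  have h1 := v_union_le_card w T (S \ T)
  rwa [Finset.union_sdiff_of_subset h] at h1

lemma Ind.subset {w : Matroidal m} {S T : Finset (Fin m)} (hS : Ind w S) (hTS : T ⊆ S) :
    Ind w T := by
  have h1 := v_le_of_subset w hTS
  have h2 := v_le_card w T
  have h3 : (S \ T).card = S.card - T.card := Finset.card_sdiff_of_subset hTS
  have h4 : T.card ≤ S.card := Finset.card_le_card hTS
  unfold Ind at *; omega

lemma v_span (w : Matroidal m) {T S : Finset (Fin m)} (hTS : T ⊆ S)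
    (h : ∀ e ∈ S, w.v (insert e T) = w.v T) : w.v S = w.v T := by
  classical
  have key : ∀ U : Finset (Fin m), U ⊆ S → w.v (T ∪ U) = w.v T := by
    intro U
    induction U using Finset.induction_on with
    | empty => simp
    | @insert a s ha ih =>
      intro hsub
      have haS : a ∈ S := hsub (Finset.mem_insert_self a s)
      have hsS : s ⊆ S := fun x hx => hsub (Finset.mem_insert_of_mem hx)
      have hTs := ih hsS
      have hu : T ∪ insert a s = (T ∪ s) ∪ (insert a T) := by
        ext x; simp only [Finset.mem_insert, Finset.mem_union]; tauto
      have hsub2 : T ⊆ (T ∪ s) ∩ (insert a T) := by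
        intro x hx; simp [Finset.mem_inter, Finset.mem_union, Finset.mem_insert, hx]
      have hmono := w.mono hsub2
      have hsm := w.submodular (T ∪ s) (insert a T)
      rw [← hu] at hsm
      have h2 : w.v (insert a T) = w.v T := h a haS
      have hge : w.v T ≤ w.v (T ∪ insert a s) :=
        w.mono (Finset.subset_union_left)
      omega
  have h5 := key S (subset_refl S)
  rwa [Finset.union_eq_right.mpr hTS] at h5

lemma Ind.exchange {w : Matroidal m} {S T : Finset (Fin m)} (hS : Ind w S) (hT : Ind w T)
    (h : S.card < T.card) : ∃ e ∈ T, e ∉ S ∧ Ind w (insert e S) := by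
  classical
  by_contra hc
  push_neg at hc
  have hall : ∀ e ∈ S ∪ T, w.v (insert e S) = w.v S := by
    intro e he
    rcases Finset.mem_union.mp he with h1 | h1
    · rw [Finset.insert_eq_self.mpr h1]
    · by_cases h2 : e ∈ S
      · rw [Finset.insert_eq_self.mpr h2]
      · have h3 := hc e h1 h2
        have h4 := w.marginal S e
        have h5 : w.v S ≤ w.v (insert e S) := w.mono (Finset.subset_insert e S)
        have h6 : (insert e S).card = S.card + 1 := Finset.card_insert_of_notMem h2
        unfold Ind at *
        omega
  have hsp := v_span w (Finset.subset_union_left (s₂ := T)) hall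
  have h7 : w.v T ≤ w.v (S ∪ T) := w.mono Finset.subset_union_right
  unfold Ind at *; omega

lemma exists_ind_subset (w : Matroidal m) (S : Finset (Fin m)) :
    ∃ T ⊆ S, Ind w T ∧ T.card = w.v S := by
  classical
  obtain ⟨T, hTmem, hTmax⟩ := Finset.exists_max_image
    (S.powerset.filter (fun T => w.v T = T.card)) Finset.card
    ⟨∅, by simp [w.v_empty]⟩
  simp only [Finset.mem_filter, Finset.mem_powerset] at hTmem
  obtain ⟨hTS, hTind⟩ := hTmem
  refine ⟨T, hTS, hTind, ?_⟩
  have hspan : ∀ e ∈ S, w.v (insert e T) = w.v T := by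
    intro e heS
    by_cases h2 : e ∈ T
    · rw [Finset.insert_eq_self.mpr h2]
    · by_contra h3
      have h4 := w.marginal T e
      have h5 : w.v T ≤ w.v (insert e T) := w.mono (Finset.subset_insert e T)
      have h6 : (insert e T).card = T.card + 1 := Finset.card_insert_of_notMem h2
      have h7 : w.v (insert e T) = (insert e T).card := by omega
      have h8 := hTmax (insert e T) (by
        simp only [Finset.mem_filter, Finset.mem_powerset]
        exact ⟨Finset.insert_subset heS hTS, h7⟩)
      omega
  have h9 := v_span w hTS hspan
  omega

lemma ind_restrict_iff {w : Matroidal m} {X S : Finset (Fin m)} :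
    Ind (w.restrict X) S ↔ S ⊆ X ∧ Ind w S := by
  unfold Ind
  have h1 : (w.restrict X).v S = w.v (X ∩ S) := rfl
  constructor
  · intro h
    rw [h1] at h
    have h2 := v_le_card w (X ∩ S)
    have h3 : (X ∩ S).card ≤ S.card := Finset.card_le_card Finset.inter_subset_right
    have h4 : X ∩ S = S :=
      Finset.eq_of_subset_of_card_le Finset.inter_subset_right (by omega)
    constructor
    · intro x hx
      have hx2 : x ∈ X ∩ S := h4.symm ▸ hx
      exact (Finset.mem_inter.mp hx2).1
    · rw [← h4]; omega
  · rintro ⟨hs, h2⟩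
    rw [h1, Finset.inter_eq_right.mpr hs]; exact h2

end MRF
namespace MRF

variable {n m : ℕ}

def cardVec (C : Fin n → Finset (Fin m)) : Fin n → ℕ := fun j => (C j).card

def CleanAlloc (Q : Fin n → Matroidal m) (C : Fin n → Finset (Fin m)) : Prop :=
  IsAllocation C ∧ ∀ j, Ind (Q j) (C j)

def addOne (u : Fin n → ℕ) (j : Fin n) : Fin n → ℕ :=
  fun r => if r = j then u j + 1 else u r

def transfer (u : Fin n → ℕ) (t l : Fin n) : Fin n → ℕ :=
  fun r => if r = t then u t + 1 else if r = l then u l - 1 else u r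

lemma move_clean {Q : Fin n → Matroidal m} {C : Fin n → Finset (Fin m)} (hC : CleanAlloc Q C)
    {j l : Fin n} {e : Fin m} (hjl : l ≠ j) (heCl : e ∈ C l) (heCj : e ∉ C j)
    (hins : Ind (Q j) (insert e (C j))) :
    ∃ C'' : Fin n → Finset (Fin m), CleanAlloc Q C'' ∧
      C'' j = insert e (C j) ∧ C'' l = (C l).erase e ∧
      (∀ r, r ≠ j → r ≠ l → C'' r = C r) ∧
      cardVec C'' = transfer (cardVec C) j l := by
  classical
  set C'' := Function.update (Function.update C j (insert e (C j))) l ((C l).erase e) with hC''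
  have hj' : C'' j = insert e (C j) := by
    rw [hC'', Function.update_of_ne (Ne.symm hjl), Function.update_self]
  have hl' : C'' l = (C l).erase e := by rw [hC'', Function.update_self]
  have hr' : ∀ r, r ≠ j → r ≠ l → C'' r = C r := by
    intro r h1 h2
    rw [hC'', Function.update_of_ne h2, Function.update_of_ne h1]
  have hsub : ∀ r, r ≠ j → C'' r ⊆ C r := by
    intro r h1
    by_cases h2 : r = l
    · subst h2; rw [hl']; exact Finset.erase_subset _ _
    · rw [hr' r h1 h2]
  have hnotmem : ∀ r, r ≠ j → e ∉ C'' r := by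
    intro r h1
    by_cases h2 : r = l
    · subst h2; rw [hl']; exact Finset.notMem_erase _ _
    · rw [hr' r h1 h2]
      intro hmem
      exact (Finset.disjoint_left.mp (hC.1 l r (fun h => h2 h.symm)) heCl) hmem
  refine ⟨C'', ⟨?_, ?_⟩, hj', hl', hr', ?_⟩
  · intro a b hab
    by_cases ha : a = j
    · subst ha
      rw [hj']
      rw [Finset.disjoint_insert_left]
      exact ⟨hnotmem b (Ne.symm hab), (hC.1 _ _ hab).mono_right (hsub b (Ne.symm hab))⟩
    · by_cases hb : b = j
      · subst hb
        rw [hj', Finset.disjoint_insert_right]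
        exact ⟨hnotmem a ha, (hC.1 _ _ hab).mono_left (hsub a ha)⟩
      · exact ((hC.1 a b hab).mono (hsub a ha) (hsub b hb))
  · intro r
    by_cases h1 : r = j
    · subst h1; rw [hj']; exact hins
    · by_cases h2 : r = l
      · subst h2; rw [hl']; exact (hC.2 r).subset (Finset.erase_subset _ _)
      · rw [hr' r h1 h2]; exact hC.2 r
  · funext r
    show (C'' r).card = transfer (cardVec C) j l r
    unfold transfer cardVec
    by_cases h1 : r = j
    · subst h1
      rw [if_pos rfl, hj', Finset.card_insert_of_notMem heCj]
    · rw [if_neg h1]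
      by_cases h2 : r = l
      · subst h2
        rw [if_pos rfl, hl', Finset.card_erase_of_mem heCl]
      · rw [if_neg h2, hr' r h1 h2]

lemma AL (Q : Fin n → Matroidal m) :
    ∀ (N : ℕ) (C D : Fin n → Finset (Fin m)), (∑ l, ((D l) \ (C l)).card) ≤ N →
    CleanAlloc Q C → IsAllocation D →
    (∀ l, (C l).card ≤ (D l).card → Ind (Q l) (D l)) →
    ∀ j, (C j).card < (D j).card →
    ∃ C', CleanAlloc Q C' ∧
      (cardVec C' = addOne (cardVec C) j ∨
       ∃ l, l ≠ j ∧ (D l).card < (C l).card ∧ cardVec C' = transfer (cardVec C) j l) := by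
  classical
  intro N
  induction N with
  | zero =>
    intro C D hmeas hC hD hHD j hj
    exfalso
    have h1 : (D j).card ≤ (C j).card + (D j \ C j).card := by
      have : D j ⊆ C j ∪ (D j \ C j) := by
        intro x hx
        by_cases h : x ∈ C j
        · exact Finset.mem_union_left _ h
        · exact Finset.mem_union_right _ (Finset.mem_sdiff.mpr ⟨hx, h⟩)
      calc (D j).card ≤ (C j ∪ (D j \ C j)).card := Finset.card_le_card this
        _ ≤ (C j).card + (D j \ C j).card := Finset.card_union_le _ _
    have h2 : (D j \ C j).card ≤ ∑ l, ((D l) \ (C l)).card :=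
      Finset.single_le_sum (f := fun l => ((D l) \ (C l)).card)
        (fun _ _ => Nat.zero_le _) (Finset.mem_univ j)
    omega
  | succ N ih =>
    intro C D hmeas hC hD hHD j hj
    have hDjInd : Ind (Q j) (D j) := hHD j hj.le
    obtain ⟨e, heD, heC, hins⟩ := Ind.exchange (hC.2 j) hDjInd hj
    by_cases hfree : ∀ l, e ∉ C l
    · refine ⟨Function.update C j (insert e (C j)), ⟨?_, ?_⟩, Or.inl ?_⟩
      · intro a b hab
        by_cases ha : a = j
        · subst ha
          rw [Function.update_self, Function.update_of_ne (Ne.symm hab),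
            Finset.disjoint_insert_left]
          exact ⟨hfree b, hC.1 _ _ hab⟩
        · rw [Function.update_of_ne ha]
          by_cases hb : b = j
          · subst hb
            rw [Function.update_self, Finset.disjoint_insert_right]
            exact ⟨hfree a, hC.1 _ _ hab⟩
          · rw [Function.update_of_ne hb]; exact hC.1 _ _ hab
      · intro r
        by_cases h1 : r = j
        · subst h1; rw [Function.update_self]; exact hins
        · rw [Function.update_of_ne h1]; exact hC.2 r
      · funext r
        show ((Function.update C j (insert e (C j))) r).card = addOne (cardVec C) j r
        unfold addOne cardVec
        by_cases h1 : r = j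
        · subst h1
          rw [if_pos rfl, Function.update_self, Finset.card_insert_of_notMem heC]
        · rw [if_neg h1, Function.update_of_ne h1]
    · push_neg at hfree
      obtain ⟨l, hel⟩ := hfree
      have hlj : l ≠ j := fun h => heC (h ▸ hel)
      obtain ⟨C'', hC'', hj', hl', hr', hcard''⟩ := move_clean hC hlj hel heC hins
      by_cases hdl : (D l).card < (C l).card
      · exact ⟨C'', hC'', Or.inr ⟨l, hlj, hdl, hcard''⟩⟩
      · push_neg at hdl
        have heDl : e ∉ D l :=
          fun hmem => (Finset.disjoint_left.mp (hD j l (Ne.symm hlj)) heD) hmem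
        have hmeas'' : (∑ r, ((D r) \ (C'' r)).card) ≤ N := by
          have hje : (D j \ C'' j).card = (D j \ C j).card - 1 := by
            rw [hj']
            have : D j \ insert e (C j) = (D j \ C j).erase e := by
              ext x
              simp only [Finset.mem_sdiff, Finset.mem_insert, Finset.mem_erase]
              tauto
            rw [this, Finset.card_erase_of_mem (Finset.mem_sdiff.mpr ⟨heD, heC⟩)]
          have hle : (D l \ C'' l).card = (D l \ C l).card := by
            rw [hl']
            congr 1
            ext x
            simp only [Finset.mem_sdiff, Finset.mem_erase]
            constructor
            · rintro ⟨h1, h2⟩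
              refine ⟨h1, fun h3 => h2 ⟨fun h4 => heDl (h4 ▸ h1), h3⟩⟩
            · rintro ⟨h1, h2⟩
              exact ⟨h1, fun h3 => h2 h3.2⟩
          have hsplit : ∀ (E : Fin n → Finset (Fin m)),
              (∑ r, ((D r) \ (E r)).card) =
              (D j \ E j).card + (D l \ E l).card +
                ∑ r ∈ (Finset.univ.erase j).erase l, ((D r) \ (E r)).card := by
            intro E
            rw [← Finset.add_sum_erase _ _ (Finset.mem_univ j),
              ← Finset.add_sum_erase _ _ (Finset.mem_erase.mpr ⟨hlj, Finset.mem_univ l⟩)]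
            ring
          have h1 := hsplit C
          have h2 := hsplit C''
          have h3 : ∑ r ∈ (Finset.univ.erase j).erase l, ((D r) \ (C'' r)).card =
              ∑ r ∈ (Finset.univ.erase j).erase l, ((D r) \ (C r)).card := by
            apply Finset.sum_congr rfl
            intro r hr
            simp only [Finset.mem_erase] at hr
            rw [hr' r hr.2.1 hr.1]
          have h4 : 1 ≤ (D j \ C j).card := by
            have : e ∈ D j \ C j := Finset.mem_sdiff.mpr ⟨heD, heC⟩
            exact Finset.card_pos.mpr ⟨e, this⟩
          omega
        have hHD'' : ∀ r, (C'' r).card ≤ (D r).card → Ind (Q r) (D r) := by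
          intro r _
          by_cases h1 : r = j
          · subst h1; exact hDjInd
          · by_cases h2 : r = l
            · subst h2; exact hHD r hdl
            · apply hHD r
              rw [← hr' r h1 h2]
              have := congrFun hcard'' r
              unfold transfer cardVec at this
              rw [if_neg h1, if_neg h2] at this
              rw [hr' r h1 h2] at *
              omega
        have hdef : (C'' l).card < (D l).card := by
          rw [hl', Finset.card_erase_of_mem hel]
          have : 1 ≤ (C l).card := Finset.card_pos.mpr ⟨e, hel⟩
          omega
        obtain ⟨C', hC', hres⟩ := ih C'' D hmeas'' hC'' hD hHD'' l hdef
        have hcards : ∀ r, (C'' r).card = transfer (cardVec C) j l r := fun r => congrFun hcard'' r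
        have hcj : (C'' j).card = (C j).card + 1 := by
          have := hcards j; unfold transfer cardVec at this; rw [if_pos rfl] at this; exact this
        have hcl : (C'' l).card = (C l).card - 1 := by
          have := hcards l; unfold transfer cardVec at this
          rw [if_neg hlj, if_pos rfl] at this; exact this
        have hclpos : 1 ≤ (C l).card := Finset.card_pos.mpr ⟨e, hel⟩
        refine ⟨C', hC', ?_⟩
        rcases hres with h | ⟨l₂, hl₂l, hl₂card, h⟩
        · left
          rw [h]; funext r
          unfold addOne cardVec
          by_cases h1 : r = l
          · subst h1
            rw [if_pos rfl, if_neg hlj, hcl]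
            omega
          · rw [if_neg h1]
            by_cases h2 : r = j
            · subst h2; rw [if_pos rfl, hcj]
            · rw [if_neg h2, hr' r h2 h1]
        · right
          have hl₂j : l₂ ≠ j := by
            intro hcontra
            subst hcontra
            rw [hcj] at hl₂card
            omega
          have hl₂l' : l₂ ≠ l := by
            intro hcontra
            subst hcontra
            rw [hcl] at hl₂card
            omega
          have hl₂c : (C'' l₂).card = (C l₂).card := by rw [hr' l₂ hl₂j hl₂l']
          refine ⟨l₂, hl₂j, by rw [← hl₂c]; exact hl₂card, ?_⟩
          rw [h]; funext r
          show transfer (cardVec C'') l l₂ r = transfer (cardVec C) j l₂ r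
          unfold transfer cardVec
          by_cases h1 : r = j
          · subst h1
            simp only [if_neg (Ne.symm hlj), if_neg (Ne.symm hl₂j), if_pos rfl]
            exact hcj
          · by_cases h2 : r = l
            · subst h2
              simp only [eq_self_iff_true, if_true, if_pos rfl, if_neg hlj, if_neg (Ne.symm hl₂l')]
              omega
            · by_cases h3 : r = l₂
              · subst h3
                simp only [if_neg hl₂l', if_neg hl₂j, if_pos rfl]
                rw [hl₂c]
              · simp only [if_neg h1, if_neg h2, if_neg h3]
                rw [hr' r h1 h2]

end MRF
namespace MRF

variable {n m : ℕ}

lemma kSS_le (u : Fin n → ℕ) {S : Finset (Fin n)} {k : ℕ} (h : S.card = k) :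
    kSmallestSum u k ≤ ∑ i ∈ S, u i := Nat.sInf_le ⟨S, h, rfl⟩

lemma kSS_exists (u : Fin n → ℕ) {k : ℕ} (hk : k ≤ n) :
    ∃ S : Finset (Fin n), S.card = k ∧ kSmallestSum u k = ∑ i ∈ S, u i := by
  have hne : {s | ∃ S : Finset (Fin n), S.card = k ∧ s = ∑ i ∈ S, u i}.Nonempty := by
    obtain ⟨T, _, hTc⟩ := Finset.exists_subset_card_eq
      (s := (Finset.univ : Finset (Fin n))) (n := k) (by simpa using hk)
    exact ⟨∑ i ∈ T, u i, T, hTc, rfl⟩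
  have hmem := Nat.sInf_mem hne
  obtain ⟨S, hSc, hEq⟩ := hmem
  exact ⟨S, hSc, hEq⟩

lemma kSS_mono {u u' : Fin n → ℕ} {k : ℕ} (hk : k ≤ n) (h : ∀ j, u j ≤ u' j) :
    kSmallestSum u k ≤ kSmallestSum u' k := by
  obtain ⟨S, hSc, hEq⟩ := kSS_exists u' hk
  rw [hEq]
  exact le_trans (kSS_le u hSc) (Finset.sum_le_sum fun i _ => h i)

lemma kSS_univ (u : Fin n → ℕ) : kSmallestSum u n = ∑ j, u j := by
  apply le_antisymm
  · exact kSS_le u (by simp)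
  · obtain ⟨S, hSc, hEq⟩ := kSS_exists u (le_refl n)
    have hu : S = Finset.univ := Finset.eq_univ_of_card S (by rw [hSc]; simp)
    rw [hEq, hu]

lemma kSS_perm (u : Fin n → ℕ) (σ : Equiv.Perm (Fin n)) (k : ℕ) :
    kSmallestSum (u ∘ σ) k = kSmallestSum u k := by
  unfold kSmallestSum
  congr 1
  ext s
  simp only [Set.mem_setOf_eq]
  constructor
  · rintro ⟨S, hSc, rfl⟩
    refine ⟨S.image σ, ?_, ?_⟩
    · rw [Finset.card_image_of_injective _ σ.injective, hSc]
    · rw [Finset.sum_image (fun a _ b _ h => σ.injective h)]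
      rfl
  · rintro ⟨S, hSc, rfl⟩
    refine ⟨S.image σ.symm, ?_, ?_⟩
    · rw [Finset.card_image_of_injective _ σ.symm.injective, hSc]
    · rw [Finset.sum_image (fun a _ b _ h => σ.symm.injective h)]
      apply Finset.sum_congr rfl
      intro x hx
      simp

lemma transfer_eq_swap {u : Fin n → ℕ} {t l : Fin n} (h : t ≠ l) (hval : u l = u t + 1) :
    transfer u t l = u ∘ (Equiv.swap t l) := by
  funext r
  unfold transfer
  by_cases h1 : r = t
  · subst h1; simp [Equiv.swap_apply_left, hval]
  · by_cases h2 : r = l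
    · subst h2
      simp [Equiv.swap_apply_right, hval, if_neg (Ne.symm h)]
    · simp [h1, h2, Equiv.swap_apply_of_ne_of_ne h1 h2]

lemma sum_threshold {u : Fin n → ℕ} {c : ℕ} {S F : Finset (Fin n)} (hcard : S.card = F.card)
    (hF : ∀ x ∈ F, u x ≤ c) (hNF : ∀ x, x ∉ F → c + 1 ≤ u x) :
    ∑ i ∈ F, u i + (S \ F).card ≤ ∑ i ∈ S, u i := by
  classical
  have h1 : ∑ i ∈ S ∩ F, u i + ∑ i ∈ S \ F, u i = ∑ i ∈ S, u i :=
    Finset.sum_inter_add_sum_sdiff S F u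
  have h2 : ∑ i ∈ F ∩ S, u i + ∑ i ∈ F \ S, u i = ∑ i ∈ F, u i :=
    Finset.sum_inter_add_sum_sdiff F S u
  have h3 : (c + 1) * (S \ F).card ≤ ∑ i ∈ S \ F, u i := by
    calc (c + 1) * (S \ F).card = ∑ _i ∈ S \ F, (c + 1) := by
          rw [Finset.sum_const, smul_eq_mul, Nat.mul_comm]
      _ ≤ ∑ i ∈ S \ F, u i :=
          Finset.sum_le_sum (fun i hi => hNF i (Finset.mem_sdiff.mp hi).2)
  have h4 : ∑ i ∈ F \ S, u i ≤ c * (F \ S).card := by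
    calc ∑ i ∈ F \ S, u i ≤ ∑ _i ∈ F \ S, c :=
          Finset.sum_le_sum (fun i hi => hF i (Finset.mem_sdiff.mp hi).1)
      _ = c * (F \ S).card := by rw [Finset.sum_const, smul_eq_mul, Nat.mul_comm]
  have h5 : ∑ i ∈ F ∩ S, u i = ∑ i ∈ S ∩ F, u i := by rw [Finset.inter_comm]
  have hc1 : (S ∩ F).card + (S \ F).card = S.card := Finset.card_inter_add_card_sdiff S F
  have hc2 : (F ∩ S).card + (F \ S).card = F.card := Finset.card_inter_add_card_sdiff F S
  have hc3 : (F ∩ S).card = (S ∩ F).card := by rw [Finset.inter_comm]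
  have h6 : (F \ S).card = (S \ F).card := by omega
  have h7 : (c + 1) * (S \ F).card = c * (S \ F).card + (S \ F).card := by ring
  rw [h6] at h4
  omega

lemma sum_transfer {u : Fin n → ℕ} {t l : Fin n} (htl : t ≠ l) (hpos : 1 ≤ u l)
    (S : Finset (Fin n)) :
    ∑ i ∈ S, transfer u t l i + (if l ∈ S then 1 else 0) =
      ∑ i ∈ S, u i + (if t ∈ S then 1 else 0) := by
  classical
  have h1 : ∀ i ∈ S, transfer u t l i + (if i = l then 1 else 0) =
      u i + (if i = t then 1 else 0) := by
    intro i _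
    unfold transfer
    by_cases hit : i = t
    · subst hit; simp [Ne.symm, htl]
    · by_cases hil : i = l
      · subst hil; simp [hit]; omega
      · simp [hit, hil]
  have h2 := Finset.sum_congr rfl h1
  rw [Finset.sum_add_distrib, Finset.sum_add_distrib,
    Finset.sum_ite_eq' S l (fun _ => 1), Finset.sum_ite_eq' S t (fun _ => 1)] at h2
  exact h2

lemma sum_addOne {u : Fin n → ℕ} {j : Fin n} {S : Finset (Fin n)} (hj : j ∈ S) :
    ∑ i ∈ S, addOne u j i = ∑ i ∈ S, u i + 1 := by
  classical
  have h1 : ∀ i ∈ S, addOne u j i = u i + (if i = j then 1 else 0) := by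
    intro i _
    unfold addOne
    by_cases hij : i = j
    · subst hij; simp
    · simp [hij]
  have h2 := Finset.sum_congr rfl h1
  rw [Finset.sum_add_distrib, Finset.sum_ite_eq' S j (fun _ => 1), if_pos hj] at h2
  exact h2

lemma PD_strict {u : Fin n → ℕ} {t l : Fin n} (htl : t ≠ l) (h2 : u t + 2 ≤ u l) :
    ∃ k ≤ n, kSmallestSum u k < kSmallestSum (transfer u t l) k := by
  classical
  set c := u t with hc
  set F := Finset.univ.filter (fun j => u j ≤ c) with hFdef
  have hFcard : F.card ≤ n := le_trans (Finset.card_le_univ F) (by simp)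
  refine ⟨F.card, hFcard, ?_⟩
  have htF : t ∈ F := by simp [hFdef, hc]
  have hlF : l ∉ F := by simp [hFdef]; omega
  have hF1 : ∀ x ∈ F, u x ≤ c := fun x hx => (Finset.mem_filter.mp hx).2
  have hNF : ∀ x, x ∉ F → c + 1 ≤ u x := by
    intro x hx; simp [hFdef] at hx; omega
  have hLHS : kSmallestSum u F.card = ∑ i ∈ F, u i := by
    apply le_antisymm (kSS_le u rfl)
    obtain ⟨S, hSc, hEq⟩ := kSS_exists u hFcard
    rw [hEq]
    have := sum_threshold hSc hF1 hNF
    omega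
  rw [hLHS]
  -- the modified function u₁
  set u₁ := Function.update u l (u l - 1) with hu₁
  have hu₁F : ∀ x ∈ F, u₁ x ≤ c := by
    intro x hx
    rw [hu₁, Function.update_of_ne (fun hh => hlF (by rw [← hh]; exact hx))]
    exact hF1 x hx
  have hu₁NF : ∀ x, x ∉ F → c + 1 ≤ u₁ x := by
    intro x hx
    by_cases hxl : x = l
    · subst hxl; rw [hu₁, Function.update_self]; omega
    · rw [hu₁, Function.update_of_ne hxl]; exact hNF x hx
  have hFu₁ : ∑ i ∈ F, u₁ i = ∑ i ∈ F, u i := by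
    apply Finset.sum_congr rfl
    intro x hx
    rw [hu₁, Function.update_of_ne (fun hh => hlF (by rw [← hh]; exact hx))]
  have key : ∀ S : Finset (Fin n), S.card = F.card →
      ∑ i ∈ F, u i + 1 ≤ ∑ i ∈ S, transfer u t l i := by
    intro S hSc
    have htrans : ∀ i ∈ S, transfer u t l i = u₁ i + (if i = t then 1 else 0) := by
      intro i _
      unfold transfer
      by_cases hit : i = t
      · subst hit
        rw [hu₁, Function.update_of_ne htl]
        simp [if_neg htl]
      · by_cases hil : i = l
        · subst hil
          rw [hu₁, Function.update_self]
          simp [hit]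
        · rw [hu₁, Function.update_of_ne hil]
          simp [hit, hil]
    have hsum := Finset.sum_congr rfl htrans
    rw [Finset.sum_add_distrib, Finset.sum_ite_eq' S t (fun _ => 1)] at hsum
    have hbase := sum_threshold (u := u₁) hSc hu₁F hu₁NF
    rw [hFu₁] at hbase
    have hsum' : ∑ i ∈ S, transfer u t l i = ∑ x ∈ S, u₁ x + (if t ∈ S then 1 else 0) := hsum
    clear hsum
    by_cases htS : t ∈ S
    · rw [if_pos htS] at hsum'; omega
    · rw [if_neg htS] at hsum'
      -- t ∈ F \ S, so (S \ F).card ≥ 1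
      have h6 : (F \ S).card = (S \ F).card := by
        have hc1 : (S ∩ F).card + (S \ F).card = S.card := Finset.card_inter_add_card_sdiff S F
        have hc2 : (F ∩ S).card + (F \ S).card = F.card := Finset.card_inter_add_card_sdiff F S
        have hc3 : (F ∩ S).card = (S ∩ F).card := by rw [Finset.inter_comm]
        omega
      have h7 : 1 ≤ (F \ S).card :=
        Finset.card_pos.mpr ⟨t, Finset.mem_sdiff.mpr ⟨htF, htS⟩⟩
      omega
  obtain ⟨S, hSc, hEq⟩ := kSS_exists (transfer u t l) hFcard
  rw [hEq]
  have := key S hSc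
  omega

lemma PD_ptwise {u : Fin n → ℕ} {t l : Fin n} (htl : t ≠ l) (h2 : u t + 2 ≤ u l) {k : ℕ}
    (hk : k ≤ n) : kSmallestSum u k ≤ kSmallestSum (transfer u t l) k := by
  classical
  obtain ⟨S, hSc, hEq⟩ := kSS_exists (transfer u t l) hk
  rw [hEq]
  have hpos : 1 ≤ u l := by omega
  have hsum := sum_transfer htl hpos S
  by_cases hlS : l ∈ S
  · by_cases htS : t ∈ S
    · rw [if_pos hlS, if_pos htS] at hsum
      have : ∑ i ∈ S, transfer u t l i = ∑ i ∈ S, u i := by omega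
      rw [this]
      exact kSS_le u hSc
    · rw [if_pos hlS, if_neg htS] at hsum
      set S' := insert t (S.erase l) with hS'
      have htne : t ∉ S.erase l := fun hh => htS (Finset.mem_of_mem_erase hh)
      have hS'c : S'.card = k := by
        rw [hS', Finset.card_insert_of_notMem htne, Finset.card_erase_of_mem hlS]
        have : 1 ≤ S.card := Finset.card_pos.mpr ⟨l, hlS⟩
        omega
      have hS'sum : ∑ i ∈ S', u i + u l = ∑ i ∈ S, u i + u t := by
        rw [hS', Finset.sum_insert htne]
        have := Finset.sum_erase_add S u hlS
        omega
      have hkle := kSS_le u hS'c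
      omega
  · rw [if_neg hlS] at hsum
    have hle : ∑ i ∈ S, u i ≤ ∑ i ∈ S, transfer u t l i := by
      by_cases htS : t ∈ S
      · rw [if_pos htS] at hsum; omega
      · rw [if_neg htS] at hsum; omega
    exact le_trans (kSS_le u hSc) hle

end MRF
namespace MRF

variable {n m : ℕ}

def Ach (Q : Fin n → Matroidal m) (x : Fin n → ℕ) : Prop :=
  ∃ C, CleanAlloc Q C ∧ cardVec C = x

lemma Ach.le_m {Q : Fin n → Matroidal m} {x : Fin n → ℕ} (hx : Ach Q x) (j : Fin n) :
    x j ≤ m := by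
  obtain ⟨C, _, rfl⟩ := hx
  calc (C j).card ≤ (Finset.univ : Finset (Fin m)).card := Finset.card_le_univ _
    _ = m := by simp

lemma AL_vec' (Q : Fin n → Matroidal m) {C D : Fin n → Finset (Fin m)}
    (hC : CleanAlloc Q C) (hD : IsAllocation D)
    (hHD : ∀ l, (C l).card ≤ (D l).card → Ind (Q l) (D l)) {j : Fin n}
    (hj : (C j).card < (D j).card) :
    Ach Q (addOne (cardVec C) j) ∨
      ∃ l, l ≠ j ∧ (D l).card < (C l).card ∧ Ach Q (transfer (cardVec C) j l) := by
  obtain ⟨C', hC', hres⟩ := AL Q _ C D le_rfl hC hD hHD j hj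
  rcases hres with h | ⟨l, h1, h2, h3⟩
  · exact Or.inl ⟨C', hC', h⟩
  · exact Or.inr ⟨l, h1, h2, C', hC', h3⟩

lemma AL_vecA (Q : Fin n → Matroidal m) {x y : Fin n → ℕ} (hx : Ach Q x) (hy : Ach Q y)
    {j : Fin n} (hj : x j < y j) :
    Ach Q (addOne x j) ∨ ∃ l, l ≠ j ∧ y l < x l ∧ Ach Q (transfer x j l) := by
  obtain ⟨C, hC, hCx⟩ := hx
  obtain ⟨D, hD, hDy⟩ := hy
  subst hCx
  subst hDy
  exact AL_vec' Q hC hD.1 (fun l _ => hD.2 l) hj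

def Phi (K : ℕ) (u : Fin n → ℕ) : ℤ :=
  ∑ j, (u j : ℤ) * (2 * (K : ℤ) - (u j : ℤ))

lemma Phi_addOne (K : ℕ) (u : Fin n → ℕ) (j : Fin n) :
    Phi K (addOne u j) = Phi K u + (2 * (K : ℤ) - 2 * (u j : ℤ) - 1) := by
  unfold Phi
  rw [← Finset.add_sum_erase _ (fun r => ((addOne u j r : ℤ) * (2 * (K:ℤ) - (addOne u j r : ℤ)))) (Finset.mem_univ j),
    ← Finset.add_sum_erase _ (fun r => ((u r : ℤ) * (2 * (K:ℤ) - (u r : ℤ)))) (Finset.mem_univ j)]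
  have h1 : ∑ r ∈ Finset.univ.erase j, ((addOne u j r : ℤ) * (2 * (K:ℤ) - (addOne u j r : ℤ))) =
      ∑ r ∈ Finset.univ.erase j, ((u r : ℤ) * (2 * (K:ℤ) - (u r : ℤ))) := by
    apply Finset.sum_congr rfl
    intro r hr
    have : addOne u j r = u r := by
      unfold addOne; rw [if_neg (Finset.mem_erase.mp hr).1]
    rw [this]
  rw [h1]
  have h2 : addOne u j j = u j + 1 := by unfold addOne; rw [if_pos rfl]
  rw [h2]
  push_cast
  ring

lemma Phi_transfer (K : ℕ) {u : Fin n → ℕ} {t l : Fin n} (htl : t ≠ l) (hpos : 1 ≤ u l) :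
    Phi K (transfer u t l) =
      Phi K u + (2 * (K : ℤ) - 2 * (u t : ℤ) - 1) - (2 * (K : ℤ) - 2 * (u l : ℤ) + 1) := by
  have hlt : l ≠ t := Ne.symm htl
  have hsplit : ∀ w : Fin n → ℕ, Phi K w =
      (w t : ℤ) * (2 * (K:ℤ) - (w t : ℤ)) + ((w l : ℤ) * (2 * (K:ℤ) - (w l : ℤ)) +
        ∑ r ∈ (Finset.univ.erase t).erase l, ((w r : ℤ) * (2 * (K:ℤ) - (w r : ℤ)))) := by
    intro w
    unfold Phi
    rw [← Finset.add_sum_erase _ (fun r => ((w r : ℤ) * (2 * (K:ℤ) - (w r : ℤ)))) (Finset.mem_univ t),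
      ← Finset.add_sum_erase _ (fun r => ((w r : ℤ) * (2 * (K:ℤ) - (w r : ℤ))))
        (Finset.mem_erase.mpr ⟨hlt, Finset.mem_univ l⟩)]
  rw [hsplit (transfer u t l), hsplit u]
  have ht' : transfer u t l t = u t + 1 := by unfold transfer; rw [if_pos rfl]
  have hl' : transfer u t l l = u l - 1 := by unfold transfer; rw [if_neg hlt, if_pos rfl]
  have hrest : ∑ r ∈ (Finset.univ.erase t).erase l,
      ((transfer u t l r : ℤ) * (2 * (K:ℤ) - (transfer u t l r : ℤ))) =
      ∑ r ∈ (Finset.univ.erase t).erase l, ((u r : ℤ) * (2 * (K:ℤ) - (u r : ℤ))) := by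
    apply Finset.sum_congr rfl
    intro r hr
    have hr1 := (Finset.mem_erase.mp hr).1
    have hr2 := (Finset.mem_erase.mp (Finset.mem_erase.mp hr).2).1
    have : transfer u t l r = u r := by unfold transfer; rw [if_neg hr2, if_neg hr1]
    rw [this]
  rw [ht', hl', hrest]
  have hcast : ((u l - 1 : ℕ) : ℤ) = (u l : ℤ) - 1 := by
    rw [Nat.cast_sub hpos]; norm_num
  rw [hcast]
  push_cast
  ring

def dsum (x y : Fin n → ℕ) : ℕ := ∑ j, (x j - y j + (y j - x j))

lemma dsum_comm (x y : Fin n → ℕ) : dsum x y = dsum y x :=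
  Finset.sum_congr rfl (fun j _ => by omega)

lemma dsum_update_second (x y : Fin n → ℕ) (j : Fin n) (a : ℕ) :
    dsum x (Function.update y j a) + (x j - y j + (y j - x j)) =
      dsum x y + (x j - a + (a - x j)) := by
  have h1 : dsum x (Function.update y j a) =
      (x j - a + (a - x j)) + ∑ r ∈ Finset.univ.erase j, (x r - y r + (y r - x r)) := by
    unfold dsum
    rw [← Finset.add_sum_erase _ _ (Finset.mem_univ j), Function.update_self]
    congr 1
    apply Finset.sum_congr rfl
    intro r hr
    rw [Function.update_of_ne (Finset.mem_erase.mp hr).1]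
  have h2 : dsum x y =
      (x j - y j + (y j - x j)) + ∑ r ∈ Finset.univ.erase j, (x r - y r + (y r - x r)) := by
    unfold dsum
    rw [← Finset.add_sum_erase _ _ (Finset.mem_univ j)]
  omega

lemma addOne_eq_update (y : Fin n → ℕ) (j : Fin n) :
    addOne y j = Function.update y j (y j + 1) := by
  funext r
  by_cases h : r = j
  · subst h; rw [Function.update_self]; unfold addOne; rw [if_pos rfl]
  · rw [Function.update_of_ne h]; unfold addOne; rw [if_neg h]

lemma transfer_eq_update {y : Fin n → ℕ} {t l : Fin n} (htl : t ≠ l) :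
    transfer y t l = Function.update (Function.update y t (y t + 1)) l (y l - 1) := by
  funext r
  by_cases h1 : r = l
  · subst h1
    rw [Function.update_self]
    unfold transfer
    rw [if_neg (Ne.symm htl), if_pos rfl]
  · rw [Function.update_of_ne h1]
    by_cases h2 : r = t
    · subst h2
      rw [Function.update_self]
      unfold transfer
      rw [if_pos rfl]
    · rw [Function.update_of_ne h2]
      unfold transfer
      rw [if_neg h2, if_neg h1]

lemma dsum_addOne_second {x y : Fin n → ℕ} {j : Fin n} (h : y j < x j) :
    dsum x (addOne y j) < dsum x y := by
  rw [addOne_eq_update]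
  have := dsum_update_second x y j (y j + 1)
  omega

lemma dsum_transfer_second {x y : Fin n → ℕ} {t l : Fin n} (htl : t ≠ l)
    (h1 : y t < x t) (h2 : x l < y l) :
    dsum x (transfer y t l) + 2 ≤ dsum x y := by
  rw [transfer_eq_update htl]
  have ha := dsum_update_second x y t (y t + 1)
  have hb := dsum_update_second x (Function.update y t (y t + 1)) l
    ((Function.update y t (y t + 1)) l - 1)
  have hyl : (Function.update y t (y t + 1)) l = y l := Function.update_of_ne (Ne.symm htl) _ _
  rw [hyl] at hb
  omega

lemma dsum_transfer_first {x y : Fin n → ℕ} {t l : Fin n} (htl : t ≠ l)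
    (h1 : x t < y t) (h2 : y l < x l) :
    dsum (transfer x t l) y + 2 ≤ dsum x y := by
  rw [dsum_comm, dsum_comm x y]
  exact dsum_transfer_second htl h1 h2

lemma phiMax_dominates_aux (Q : Fin n → Matroidal m) (PM : ℤ)
    (hub : ∀ C, CleanAlloc Q C → Phi (m + 1) (cardVec C) ≤ PM) :
    ∀ M : ℕ, ∀ x y : Fin n → ℕ, Ach Q x → Phi (m + 1) x = PM → Ach Q y →
      dsum x y ≤ M → ∀ k ≤ n, kSmallestSum y k ≤ kSmallestSum x k := by
  intro M
  induction M using Nat.strong_induction_on with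
  | _ M IH =>
    intro x y hx hPhi hy hd
    by_cases hyx : ∀ j, y j ≤ x j
    · intro k hk; exact kSS_mono hk hyx
    · push_neg at hyx
      obtain ⟨j0, hj0⟩ := hyx
      -- inner descent on the level x t
      suffices hinner : ∀ L : ℕ, ∀ t : Fin n, x t < y t → x t ≤ L →
          ∀ k ≤ n, kSmallestSum y k ≤ kSmallestSum x k by
        exact hinner (x j0) j0 hj0 le_rfl
      intro L
      induction L using Nat.strong_induction_on with
      | _ L innerIH =>
        intro t hxt hL
        have hub_ach : ∀ z, Ach Q z → Phi (m + 1) z ≤ PM := by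
          rintro z ⟨C, hC, rfl⟩; exact hub C hC
        rcases AL_vecA Q hx hy hxt with hadd | ⟨l₂, hl₂t, hl₂, hach'⟩
        · exfalso
          have h1 := hub_ach _ hadd
          rw [Phi_addOne] at h1
          have h2 : x t ≤ m := hx.le_m t
          have h3 : (x t : ℤ) ≤ (m : ℤ) := by exact_mod_cast h2
          omega
        · have hpos : 1 ≤ x l₂ := by omega
          have hPhile := hub_ach _ hach'
          rw [Phi_transfer (m + 1) (Ne.symm hl₂t) hpos, hPhi] at hPhile
          have hxl₂ : x l₂ ≤ x t + 1 := by omega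
          by_cases hswap : x l₂ = x t + 1
          · -- x-side swap, Phi preserved
            have hPhi' : Phi (m + 1) (transfer x t l₂) = PM := by
              rw [Phi_transfer (m + 1) (Ne.symm hl₂t) hpos, hPhi, hswap]
              push_cast
              ring
            have hkssEq : ∀ k, kSmallestSum (transfer x t l₂) k = kSmallestSum x k := by
              intro k
              rw [transfer_eq_swap (Ne.symm hl₂t) hswap, kSS_perm]
            have hd' := dsum_transfer_first (Ne.symm hl₂t) hxt hl₂
            have hdlt : dsum (transfer x t l₂) y < M := by omega
            have hres := IH (dsum (transfer x t l₂) y) hdlt (transfer x t l₂) y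
              hach' hPhi' hy le_rfl
            intro k hk
            rw [← hkssEq k]
            exact hres k hk
          · have hxl₂' : x l₂ ≤ x t := by omega
            -- y-side step at l₂
            rcases AL_vecA Q hy hx hl₂ with hadd2 | ⟨t₂, ht₂l₂, ht₂, hach₂⟩
            · -- y can grow at l₂
              have hd' := dsum_addOne_second (x := x) (y := y) (j := l₂) hl₂
              have hdlt : dsum x (addOne y l₂) < M := by omega
              have hres := IH (dsum x (addOne y l₂)) hdlt x (addOne y l₂)
                hx hPhi hadd2 le_rfl
              intro k hk
              refine le_trans (kSS_mono hk ?_) (hres k hk)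
              intro j
              unfold addOne
              by_cases h : j = l₂
              · subst h; rw [if_pos rfl]; omega
              · rw [if_neg h]
            · by_cases hPD : y l₂ + 2 ≤ y t₂
              · -- pointwise Lorenz improvement on y
                have hptw : ∀ k ≤ n, kSmallestSum y k ≤ kSmallestSum (transfer y l₂ t₂) k :=
                  fun k hk => PD_ptwise (Ne.symm ht₂l₂) hPD hk
                have hd' := dsum_transfer_second (x := x) (Ne.symm ht₂l₂) hl₂ ht₂
                have hdlt : dsum x (transfer y l₂ t₂) < M := by omega
                have hres := IH (dsum x (transfer y l₂ t₂)) hdlt x (transfer y l₂ t₂)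
                  hx hPhi hach₂ le_rfl
                intro k hk
                exact le_trans (hptw k hk) (hres k hk)
              · -- level descent
                have hlev : x t₂ < x t := by omega
                exact innerIH (x t₂) (by omega) t₂ ht₂ le_rfl
end MRF
namespace MRF

variable {n m : ℕ}

lemma transfer_apply_fst (u : Fin n → ℕ) (t l : Fin n) : transfer u t l t = u t + 1 := by
  unfold transfer; rw [if_pos rfl]

lemma transfer_apply_snd {u : Fin n → ℕ} {t l : Fin n} (htl : t ≠ l) :
    transfer u t l l = u l - 1 := by
  unfold transfer; rw [if_neg (Ne.symm htl), if_pos rfl]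

lemma transfer_apply_other {u : Fin n → ℕ} {t l r : Fin n} (h1 : r ≠ t) (h2 : r ≠ l) :
    transfer u t l r = u r := by
  unfold transfer; rw [if_neg h1, if_neg h2]

lemma clean_of_cLD {Q : Fin n → Matroidal m} {A : Fin n → Finset (Fin m)} (h : A ∈ cLD Q) :
    CleanAlloc Q A := ⟨h.2.1, fun j => h.1 j⟩

lemma val_eq_cardVec {Q : Fin n → Matroidal m} {A : Fin n → Finset (Fin m)} (h : Clean Q A) :
    (fun i => (Q i).v (A i)) = cardVec A := funext h

lemma LD_prop {Q : Fin n → Matroidal m} {A : Fin n → Finset (Fin m)} (h : A ∈ cLD Q) :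
    ∀ z, Ach Q z → ∀ k ≤ n, kSmallestSum z k ≤ kSmallestSum (cardVec A) k := by
  rintro z ⟨C, hC, rfl⟩ k hk
  have h1 := h.2.2 C hC.1 k hk
  rwa [val_eq_cardVec (fun j => hC.2 j), val_eq_cardVec h.1] at h1

lemma mem_cLD_of_kss {Q : Fin n → Matroidal m} {C : Fin n → Finset (Fin m)}
    (hC : CleanAlloc Q C) {A : Fin n → Finset (Fin m)} (hA : A ∈ cLD Q)
    (h : ∀ k ≤ n, kSmallestSum (cardVec A) k ≤ kSmallestSum (cardVec C) k) : C ∈ cLD Q := by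
  refine ⟨fun j => hC.2 j, hC.1, ?_⟩
  intro B hB k hk
  have h1 := hA.2.2 B hB k hk
  rw [val_eq_cardVec hA.1] at h1
  rw [val_eq_cardVec (fun j => hC.2 j)]
  exact le_trans h1 (h k hk)

lemma LD_n_contra {Q : Fin n → Matroidal m} {A : Fin n → Finset (Fin m)} (hA : A ∈ cLD Q)
    {j : Fin n} (h : Ach Q (addOne (cardVec A) j)) : False := by
  have h1 := LD_prop hA _ h n le_rfl
  rw [kSS_univ, kSS_univ, sum_addOne (Finset.mem_univ j)] at h1
  omega

lemma LD_PD_bound {Q : Fin n → Matroidal m} {A : Fin n → Finset (Fin m)} (hA : A ∈ cLD Q)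
    {t l : Fin n} (htl : t ≠ l) (h : Ach Q (transfer (cardVec A) t l)) :
    (A l).card ≤ (A t).card + 1 := by
  by_contra hgt
  push_neg at hgt
  have hgt' : cardVec A t + 2 ≤ cardVec A l := hgt
  obtain ⟨k, hk, hlt⟩ := PD_strict htl hgt'
  have h2 := LD_prop hA _ h k hk
  omega

lemma cLD_swap {Q : Fin n → Matroidal m} {A : Fin n → Finset (Fin m)} (hA : A ∈ cLD Q)
    {t l : Fin n} (htl : t ≠ l) (hval : cardVec A l = cardVec A t + 1)
    {C : Fin n → Finset (Fin m)} (hC : CleanAlloc Q C)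
    (hCv : cardVec C = transfer (cardVec A) t l) : C ∈ cLD Q := by
  apply mem_cLD_of_kss hC hA
  intro k hk
  rw [hCv, transfer_eq_swap htl hval, kSS_perm]

lemma cLD_nonempty (Q : Fin n → Matroidal m) : ∃ A, A ∈ cLD Q := by
  classical
  have hne : (Finset.univ.filter
      (fun C : Fin n → Finset (Fin m) => CleanAlloc Q C)).Nonempty := by
    refine ⟨fun _ => ∅, ?_⟩
    simp only [Finset.mem_filter, Finset.mem_univ, true_and]
    exact ⟨fun a b hab => by simp, fun j => by unfold Ind; simp [(Q j).v_empty]⟩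
  obtain ⟨C, hCmem, hCmax⟩ := Finset.exists_max_image _
    (fun C => Phi (m + 1) (cardVec C)) hne
  simp only [Finset.mem_filter, Finset.mem_univ, true_and] at hCmem
  have hub : ∀ D, CleanAlloc Q D → Phi (m + 1) (cardVec D) ≤ Phi (m + 1) (cardVec C) := by
    intro D hD
    exact hCmax D (by simp only [Finset.mem_filter, Finset.mem_univ, true_and]; exact hD)
  have hdom := phiMax_dominates_aux Q (Phi (m + 1) (cardVec C)) hub
  refine ⟨C, fun j => hCmem.2 j, hCmem.1, ?_⟩
  intro B hB k hk
  have hT : ∀ i : Fin n, ∃ T ⊆ B i, Ind (Q i) T ∧ T.card = (Q i).v (B i) :=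
    fun i => exists_ind_subset (Q i) (B i)
  choose T hTsub hTind hTcard using hT
  have hTalloc : IsAllocation T := fun a b hab => (hB a b hab).mono (hTsub a) (hTsub b)
  have hval : (fun i => (Q i).v (B i)) = cardVec T := funext fun i => (hTcard i).symm
  rw [hval, val_eq_cardVec (fun j => hCmem.2 j)]
  exact hdom (dsum (cardVec C) (cardVec T)) (cardVec C) (cardVec T)
    ⟨C, hCmem, rfl⟩ rfl ⟨T, ⟨hTalloc, hTind⟩, rfl⟩ le_rfl k hk

lemma minSize_attained (Q : Fin n → Matroidal m) (i : Fin n) :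
    ∃ A ∈ cLD Q, (A i).card = minSize Q i ∧ ∀ B ∈ cLD Q, (A i).card ≤ (B i).card := by
  obtain ⟨A0, hA0⟩ := cLD_nonempty Q
  have hne : {c | ∃ A ∈ cLD Q, c = (A i).card}.Nonempty := ⟨(A0 i).card, A0, hA0, rfl⟩
  have hmem := Nat.sInf_mem hne
  obtain ⟨A, hA, hAc⟩ := hmem
  refine ⟨A, hA, hAc.symm, ?_⟩
  intro B hB
  rw [← hAc]
  exact Nat.sInf_le ⟨B, hB, rfl⟩

lemma key_mono (Q Q' : Fin n → Matroidal m) (i : Fin n)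
    (hsame : ∀ j, j ≠ i → Q j = Q' j)
    (hind : ∀ S, Ind (Q i) S → Ind (Q' i) S) :
    minSize Q i ≤ minSize Q' i := by
  obtain ⟨A0, hA0, hA0e, hAmin⟩ := minSize_attained Q' i
  obtain ⟨B0, hB0, hB0e, hBmin⟩ := minSize_attained Q i
  rw [← hB0e, ← hA0e]
  set a := (A0 i).card with ha
  set b := (B0 i).card with hb
  by_contra hba
  push_neg at hba
  have main : ∀ σ : ℕ, ∀ A B : Fin n → Finset (Fin m), A ∈ cLD Q' → (A i).card = a →
      B ∈ cLD Q → (B i).card = b → dsum (cardVec A) (cardVec B) ≤ σ → False := by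
    intro σ
    induction σ using Nat.strong_induction_on with
    | _ σ IH =>
      intro A B hA hAi hB hBi hdle
      have hAQ' : CleanAlloc Q' A := clean_of_cLD hA
      have hBQ : CleanAlloc Q B := clean_of_cLD hB
      have hBQ' : CleanAlloc Q' B := by
        refine ⟨hB.2.1, fun j => ?_⟩
        by_cases hj : j = i
        · subst hj; exact hind _ (hB.1 j)
        · rw [← hsame j hj]; exact hB.1 j
      have hab : (A i).card < (B i).card := by rw [hAi, hBi]; exact hba
      rcases AL_vec' Q' hAQ' hBQ'.1 (fun l _ => hBQ'.2 l) hab with hadd | ⟨t0, ht0i, ht0B, hach0⟩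
      · exact LD_n_contra hA hadd
      · have hPD0 : (A t0).card ≤ (A i).card + 1 := LD_PD_bound hA (Ne.symm ht0i) hach0
        have ht0a : (B t0).card ≤ a := by omega
        -- inner descent
        have inner : ∀ L : ℕ, ∀ t : Fin n, t ≠ i → (B t).card < (A t).card →
            (B t).card ≤ a → (B t).card ≤ L → False := by
          intro L
          induction L using Nat.strong_induction_on with
          | _ L innerIH =>
            intro t hti htB htBa hLev
            have hHD : ∀ l, (B l).card ≤ (A l).card → Ind (Q l) (A l) := by
              intro l hle
              by_cases hl : l = i
              · exfalso; subst hl; rw [hBi, hAi] at hle; omega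
              · rw [hsame l hl]; exact hA.1 l
            rcases AL_vec' Q hBQ hA.2.1 hHD htB with hadd2 | ⟨l, hlt, hlB, hach2⟩
            · exact LD_n_contra hB hadd2
            · have hPD2 : (B l).card ≤ (B t).card + 1 := LD_PD_bound hB (Ne.symm hlt) hach2
              by_cases hli : l = i
              · have hBl : (B l).card = b := by rw [hli]; exact hBi
                have hval : cardVec B l = cardVec B t + 1 := by
                  show (B l).card = (B t).card + 1
                  omega
                obtain ⟨C', hC', hCv⟩ := hach2
                have hC'mem : C' ∈ cLD Q := cLD_swap hB (Ne.symm hlt) hval hC' hCv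
                have hmin := hBmin C' hC'mem
                have hCi : (C' i).card = (B l).card - 1 := by
                  rw [← hli]
                  have h6 := congrFun hCv l
                  rw [transfer_apply_snd (Ne.symm hlt)] at h6
                  exact h6
                omega
              · have hli' : l ≠ i := hli
                by_cases hswap2 : (B l).card = (B t).card + 1
                · obtain ⟨C', hC', hCv⟩ := hach2
                  have hC'mem : C' ∈ cLD Q := cLD_swap hB (Ne.symm hlt) hswap2 hC' hCv
                  have hC'i : (C' i).card = b := by
                    have h6 := congrFun hCv i
                    rw [transfer_apply_other (Ne.symm hti) (Ne.symm hli)] at h6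
                    exact h6.trans hBi
                  have hd2 := dsum_transfer_second (x := cardVec A) (y := cardVec B) (Ne.symm hlt) htB hlB
                  have hdlt : dsum (cardVec A) (cardVec C') < σ := by
                    rw [hCv]; omega
                  exact IH _ hdlt A C' hA hAi hC'mem hC'i le_rfl
                · have hBlBt : (B l).card ≤ (B t).card := by omega
                  rcases AL_vec' Q' hAQ' hBQ'.1 (fun r _ => hBQ'.2 r) hlB with
                    hadd3 | ⟨t', ht'l, ht'B, hach3⟩
                  · exact LD_n_contra hA hadd3
                  · have hPD3 : (A t').card ≤ (A l).card + 1 := LD_PD_bound hA (Ne.symm ht'l) hach3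
                    by_cases ht'i : t' = i
                    · subst ht'i; rw [hBi, hAi] at ht'B; omega
                    · by_cases hswap3 : (A t').card = (A l).card + 1
                      · obtain ⟨C'', hC'', hCv''⟩ := hach3
                        have hC''mem : C'' ∈ cLD Q' := cLD_swap hA (Ne.symm ht'l) hswap3 hC'' hCv''
                        have hC''i : (C'' i).card = a := by
                          have h6 := congrFun hCv'' i
                          rw [transfer_apply_other (Ne.symm hli) (Ne.symm ht'i)] at h6
                          exact h6.trans hAi
                        have hd3 := dsum_transfer_first (x := cardVec A) (y := cardVec B) (Ne.symm ht'l) hlB ht'B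
                        have hdlt : dsum (cardVec C'') (cardVec B) < σ := by
                          rw [hCv'']; omega
                        exact IH _ hdlt C'' B hC''mem hC''i hB hBi le_rfl
                      · have hAt'Al : (A t').card ≤ (A l).card := by omega
                        exact innerIH (B t').card (by omega) t' ht'i ht'B (by omega) le_rfl
        exact inner (B t0).card t0 ht0i ht0B ht0a le_rfl
  exact main (dsum (cardVec A0) (cardVec B0)) A0 B0 hA0 rfl hB0 rfl le_rfl

end MRF
/-- Lemma 3.10: the minimum size of agent `i`'s bundle over clean Lorenz dominating
allocations is monotone with respect to restricting `i`'s valuation. -/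
theorem minSize_monotone_restrict {n m : ℕ} (v : Fin n → Matroidal m) (i : Fin n)
    (X Y : Finset (Fin m)) (hXY : X ⊆ Y) :
    minSize (Function.update v i ((v i).restrict X)) i ≤
      minSize (Function.update v i ((v i).restrict Y)) i := by
  apply MRF.key_mono
  · intro j hj
    rw [Function.update_of_ne hj, Function.update_of_ne hj]
  · intro S h
    simp only [Function.update_self] at h ⊢
    rw [MRF.ind_restrict_iff] at h ⊢
    exact ⟨h.1.trans hXY, h.2⟩
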